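/- Let S be a subsemigroup of B(n) containing 0. Then there exist a unique inverse subsemigroup I of B(n) and a unique nilpotent subsemigroup N of B(n) such that I is a subsemigroup of S, N is a two-sided ideal of S, and S = I ∪ N. -/

import Mathlib

/-- The aperiodic Brandt semigroup `B(n)` on `({1..n} × {1..n}) ∪ {0}`,
with `none` playing the role of the zero element. -/
abbrev B (n : ℕ) := Option (Fin n × Fin n)

/-- Multiplication in `B(n)`: `(i,j)(k,l) = (i,l)` if `j = k`, and `0` otherwise. -/
def bmul {n : ℕ} : B n → B n → B n
  | some (i, j), some (k, l) => if j = k then some (i, l) else none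
  | _, _ => none

/-- A subset of `B(n)` is a subsemigroup if it is closed under multiplication. -/
def IsSub {n : ℕ} (T : Set (B n)) : Prop :=
  ∀ x ∈ T, ∀ y ∈ T, bmul x y ∈ T

/-- The subsemigroup of `B(n)` generated by a subset. -/
def gen {n : ℕ} (X : Set (B n)) : Set (B n) :=
  ⋂₀ {T | IsSub T ∧ X ⊆ T}

/-- `X` is a face of the subsemigroup complex `H(B(n))`: it admits an enumeration
producing a strictly increasing chain of generated subsemigroups. -/
def IsFace {n : ℕ} (X : Set (B n)) : Prop :=
  ∃ l : List (B n), l.Nodup ∧ {x | x ∈ l} = X ∧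
    ∀ (i : ℕ) (h : i < l.length), l.get ⟨i, h⟩ ∉ gen {x | x ∈ l.take i}

/-- A facet is a maximal face. -/
def IsFacet {n : ℕ} (X : Set (B n)) : Prop :=
  IsFace X ∧ ∀ Y : Set (B n), IsFace Y → X ⊆ Y → X = Y

/-- Product `x * y₁ * ⋯ * y_k` in `B(n)`. -/
def bprod {n : ℕ} : B n → List (B n) → B n
  | x, [] => x
  | x, y :: l => bprod (bmul x y) l

/-- Closure under the inverse operation `(i,j) ↦ (j,i)`. -/
def InvClosed {n : ℕ} (T : Set (B n)) : Prop :=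
  ∀ i j : Fin n, some (i, j) ∈ T → some (j, i) ∈ T

/-- A nilpotent subsemigroup of `B(n)` containing `0`: some power is `{0}`. -/
def IsNilpSub {n : ℕ} (T : Set (B n)) : Prop :=
  IsSub T ∧ none ∈ T ∧ ∃ k : ℕ, 1 ≤ k ∧
    ∀ (x : B n) (l : List (B n)), x ∈ T → (∀ y ∈ l, y ∈ T) →
      l.length + 1 = k → bprod x l = none
lemma bmul_none_left {n : ℕ} (x : B n) : bmul none x = none := rfl

lemma bmul_none_right {n : ℕ} (x : B n) : bmul x none = none := by
  cases x with
  | none => rfl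
  | some p => obtain ⟨i, j⟩ := p; rfl

lemma bmul_some {n : ℕ} (a b c d : Fin n) :
    bmul (some (a,b)) (some (c,d)) = if b = c then some (a,d) else none := rfl

lemma bprod_none {n : ℕ} (l : List (B n)) : bprod (none : B n) l = none := by
  induction l with
  | nil => rfl
  | cons y l ih => simpa [bprod, bmul_none_left] using ih

lemma bprod_append {n : ℕ} (x : B n) (l1 l2 : List (B n)) :
    bprod x (l1 ++ l2) = bprod (bprod x l1) l2 := by
  induction l1 generalizing x with
  | nil => rfl
  | cons y l1 ih => simp [bprod, ih]

lemma bprod_rep {n : ℕ} (i : Fin n) (m : ℕ) :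
    bprod (some (i,i)) (List.replicate m (some (i,i) : B n)) = some (i,i) := by
  induction m with
  | zero => rfl
  | succ m ih => simpa [bprod, bmul_some, List.replicate_succ] using ih

lemma chainL {n : ℕ} {S : Set (B n)} (hS : IsSub S) (l : List (B n)) :
    ∀ a b : Fin n, some (a,b) ∈ S → some (b,a) ∉ S →
    (∀ y ∈ l, ∃ i j : Fin n, y = some (i,j) ∧ some (i,j) ∈ S ∧ some (j,i) ∉ S) →
    bprod (some (a,b)) l ≠ none →
    ∃ vs : List (Fin n), vs.length = l.length ∧
      (a :: b :: vs).Chain' (fun u v => some (u,v) ∈ S ∧ some (v,u) ∉ S) := by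
  induction l with
  | nil =>
    intro a b h1 h2 _ _
    exact ⟨[], rfl, by simp [List.Chain', List.isChain_cons_cons]; exact ⟨h1, h2⟩⟩
  | cons y l ih =>
    intro a b h1 h2 hl hne
    obtain ⟨k, c, rfl, hy1, hy2⟩ := hl y (by simp)
    have hprod : bprod (bmul (some (a,b)) (some (k,c))) l ≠ none := hne
    have hbk : b = k := by
      by_contra h
      rw [bmul_some, if_neg h, bprod_none] at hprod
      exact hprod rfl
    subst hbk
    rw [bmul_some, if_pos rfl] at hprod
    have hac : some (a,c) ∈ S := by
      have := hS _ h1 _ hy1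
      rwa [bmul_some, if_pos rfl] at this
    have hca : some (c,a) ∉ S := by
      intro hca
      have := hS _ hca _ h1
      rw [bmul_some, if_pos rfl] at this
      exact hy2 this
    obtain ⟨vs, hlen, hch⟩ := ih a c hac hca (fun y hy => hl y (by simp [hy])) hprod
    refine ⟨c :: vs, by simp [hlen], ?_⟩
    rw [List.Chain', List.isChain_cons_cons]
    exact ⟨⟨h1, h2⟩, by rw [List.isChain_cons_cons]; exact ⟨⟨hy1, hy2⟩, (show List.IsChain _ _ from hch).tail⟩⟩

lemma nilpN {n : ℕ} {S : Set (B n)} (hS : IsSub S)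
    (x : B n) (l : List (B n))
    (hx : x = none ∨ ∃ i j : Fin n, x = some (i,j) ∧ some (i,j) ∈ S ∧ some (j,i) ∉ S)
    (hl : ∀ y ∈ l, y = none ∨ ∃ i j : Fin n, y = some (i,j) ∧ some (i,j) ∈ S ∧ some (j,i) ∉ S)
    (hlen : l.length + 1 = n + 1) : bprod x l = none := by
  by_contra hne
  rcases hx with rfl | ⟨a, b, rfl, h1, h2⟩
  · exact hne (bprod_none l)
  have hl' : ∀ y ∈ l, ∃ i j : Fin n, y = some (i,j) ∧ some (i,j) ∈ S ∧ some (j,i) ∉ S := by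
    intro y hy
    rcases hl y hy with rfl | h
    · exfalso
      apply hne
      obtain ⟨l1, l2, rfl⟩ := List.append_of_mem hy
      rw [bprod_append]
      show bprod (bmul _ none) l2 = none
      rw [bmul_none_right, bprod_none]
    · exact h
  obtain ⟨vs, hvlen, hch⟩ := chainL hS l a b h1 h2 hl' hne
  set Q : Fin n → Fin n → Prop := fun u v => some (u,v) ∈ S ∧ some (v,u) ∉ S with hQ
  haveI : IsTrans (Fin n) Q := by
    constructor
    rintro u v w ⟨q1, q2⟩ ⟨q3, q4⟩
    constructor
    · have := hS _ q1 _ q3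
      rwa [bmul_some, if_pos rfl] at this
    · intro hwu
      have := hS _ hwu _ q1
      rw [bmul_some, if_pos rfl] at this
      exact q4 this
  have hpw : (a :: b :: vs).Pairwise Q := List.isChain_iff_pairwise.mp hch
  have hnd : (a :: b :: vs).Nodup := hpw.imp (fun {u v} h => by
    rintro rfl; exact h.2 h.1)
  have := hnd.length_le_card
  simp [hvlen] at this
  omega


/-- Every subsemigroup `S` of `B(n)` containing `0` decomposes uniquely as
`S = I ∪ N` with `I` an inverse subsemigroup of `B(n)` contained in `S`, and `N`
a nilpotent subsemigroup of `B(n)` which is a two-sided ideal of `S`. -/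
theorem stmt7 (n : ℕ) (S : Set (B n)) (hS : IsSub S) (h0 : none ∈ S) :
    ∃! p : Set (B n) × Set (B n),
      (IsSub p.1 ∧ none ∈ p.1 ∧ InvClosed p.1) ∧
      IsNilpSub p.2 ∧
      p.1 ⊆ S ∧ p.2 ⊆ S ∧
      (∀ s ∈ S, ∀ x ∈ p.2, bmul s x ∈ p.2 ∧ bmul x s ∈ p.2) ∧
      S = p.1 ∪ p.2 := by
  classical
  set I : Set (B n) :=
    {x | x ∈ S ∧ ∀ i j : Fin n, x = some (i,j) → some (j,i) ∈ S} with hIdef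
  set N : Set (B n) :=
    {x | x = none ∨ ∃ i j : Fin n, x = some (i,j) ∧ some (i,j) ∈ S ∧ some (j,i) ∉ S}
    with hNdef
  have h0I : (none : B n) ∈ I := ⟨h0, fun i j h => by simp at h⟩
  have h0N : (none : B n) ∈ N := Or.inl rfl
  refine ⟨(I, N), ⟨⟨?_, h0I, ?_⟩, ⟨?_, h0N, n + 1, by omega, ?_⟩, ?_, ?_, ?_, ?_⟩, ?_⟩
  · -- IsSub I
    rintro x ⟨hx, hxinv⟩ y ⟨hy, hyinv⟩
    rcases x with _ | ⟨i, j⟩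
    · rw [bmul_none_left]; exact h0I
    rcases y with _ | ⟨k, l⟩
    · rw [bmul_none_right]; exact h0I
    rw [bmul_some]
    split
    · next hjk =>
      subst hjk
      refine ⟨?_, ?_⟩
      · have := hS _ hx _ hy
        rwa [bmul_some, if_pos rfl] at this
      · intro i' l' h
        simp only [Option.some.injEq, Prod.mk.injEq] at h
        obtain ⟨rfl, rfl⟩ := h
        have h1 := hyinv j l rfl
        have h2 := hxinv i j rfl
        have := hS _ h1 _ h2
        rwa [bmul_some, if_pos rfl] at this
    · exact h0I
  · -- InvClosed I
    rintro i j ⟨hx, hxinv⟩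
    exact ⟨hxinv i j rfl, fun i' j' h => by
      simp only [Option.some.injEq, Prod.mk.injEq] at h
      obtain ⟨rfl, rfl⟩ := h
      exact hx⟩
  · -- IsSub N
    rintro x hx y hy
    rcases x with _ | ⟨i, j⟩
    · rw [bmul_none_left]; exact h0N
    rcases y with _ | ⟨k, l⟩
    · rw [bmul_none_right]; exact h0N
    rcases hx with hx | ⟨i', j', hij, hx1, hx2⟩
    · exact absurd hx (by simp)
    rcases hy with hy | ⟨k', l', hkl, hy1, hy2⟩
    · exact absurd hy (by simp)
    simp only [Option.some.injEq, Prod.mk.injEq] at hij hkl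
    obtain ⟨rfl, rfl⟩ := hij
    obtain ⟨rfl, rfl⟩ := hkl
    rw [bmul_some]
    split
    · next hjk =>
      subst hjk
      refine Or.inr ⟨i, l, rfl, ?_, ?_⟩
      · have := hS _ hx1 _ hy1
        rwa [bmul_some, if_pos rfl] at this
      · intro hli
        have := hS _ hli _ hx1
        rw [bmul_some, if_pos rfl] at this
        exact hy2 this
    · exact h0N
  · -- nilpotency with k = n+1
    intro x l hx hl hlen
    exact nilpN hS x l hx (fun y hy => hl y hy) hlen
  · -- I ⊆ S
    exact fun x hx => hx.1
  · -- N ⊆ S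
    rintro x (rfl | ⟨i, j, rfl, h1, _⟩)
    · exact h0
    · exact h1
  · -- ideal property
    intro s hs x hx
    constructor
    · rcases s with _ | ⟨a, b⟩
      · rw [bmul_none_left]; exact h0N
      rcases x with _ | ⟨i, j⟩
      · rw [bmul_none_right]; exact h0N
      rcases hx with hx | ⟨i', j', hij, hx1, hx2⟩
      · exact absurd hx (by simp)
      simp only [Option.some.injEq, Prod.mk.injEq] at hij
      obtain ⟨rfl, rfl⟩ := hij
      rw [bmul_some]
      split
      · next hbi =>
        subst hbi
        refine Or.inr ⟨a, j, rfl, ?_, ?_⟩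
        · have := hS _ hs _ hx1
          rwa [bmul_some, if_pos rfl] at this
        · intro hja
          have := hS _ hja _ hs
          rw [bmul_some, if_pos rfl] at this
          exact hx2 this
      · exact h0N
    · rcases x with _ | ⟨i, j⟩
      · rw [bmul_none_left]; exact h0N
      rcases s with _ | ⟨a, b⟩
      · rw [bmul_none_right]; exact h0N
      rcases hx with hx | ⟨i', j', hij, hx1, hx2⟩
      · exact absurd hx (by simp)
      simp only [Option.some.injEq, Prod.mk.injEq] at hij
      obtain ⟨rfl, rfl⟩ := hij
      rw [bmul_some]
      split
      · next hja =>
        subst hja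
        refine Or.inr ⟨i, b, rfl, ?_, ?_⟩
        · have := hS _ hx1 _ hs
          rwa [bmul_some, if_pos rfl] at this
        · intro hbi
          have := hS _ hs _ hbi
          rw [bmul_some, if_pos rfl] at this
          exact hx2 this
      · exact h0N
  · -- S = I ∪ N
    ext x
    constructor
    · intro hx
      rcases x with _ | ⟨i, j⟩
      · exact Or.inl h0I
      by_cases hinv : some (j,i) ∈ S
      · refine Or.inl ⟨hx, fun i' j' h => ?_⟩
        simp only [Option.some.injEq, Prod.mk.injEq] at h
        obtain ⟨rfl, rfl⟩ := h
        exact hinv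
      · exact Or.inr (Or.inr ⟨i, j, rfl, hx, hinv⟩)
    · rintro (hx | (rfl | ⟨i, j, rfl, h1, _⟩))
      · exact hx.1
      · exact h0
      · exact h1
  · -- uniqueness
    rintro ⟨I', N'⟩ ⟨⟨hI'sub, hI'0, hI'inv⟩, ⟨hN'sub, hN'0, k, hk1, hk⟩, hI'S, hN'S,
      hideal, hunion⟩
    have hidem : ∀ i : Fin n, some (i,i) ∉ N' := by
      intro i hi
      have hmem : ∀ y ∈ List.replicate (k-1) (some (i,i) : B n), y ∈ N' := by
        intro y hy
        rw [List.eq_of_mem_replicate hy]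
        exact hi
      have := hk (some (i,i)) (List.replicate (k-1) (some (i,i))) hi hmem
        (by simp [List.length_replicate]; omega)
      rw [bprod_rep] at this
      exact Option.some_ne_none _ this
    have hN'rev : ∀ i j : Fin n, some (i,j) ∈ N' → some (j,i) ∉ S := by
      intro i j h hji
      have := (hideal (some (j,i)) hji (some (i,j)) h).2
      rw [bmul_some, if_pos rfl] at this
      exact hidem i this
    have hNN' : ∀ i j : Fin n, some (i,j) ∈ S → some (j,i) ∉ S → some (i,j) ∈ N' := by
      intro i j h1 h2
      have : some (i,j) ∈ I' ∪ N' := hunion ▸ h1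
      rcases this with h | h
      · exact absurd (hI'S (hI'inv i j h)) h2
      · exact h
    have hIeq : I' = I := by
      ext x
      constructor
      · intro hx
        refine ⟨hI'S hx, fun i j h => ?_⟩
        subst h
        exact hI'S (hI'inv i j hx)
      · rintro ⟨hx1, hx2⟩
        rcases x with _ | ⟨i, j⟩
        · exact hI'0
        have hji : some (j,i) ∈ S := hx2 i j rfl
        have : some (i,j) ∈ I' ∪ N' := hunion ▸ hx1
        rcases this with h | h
        · exact h
        · exact absurd hji (hN'rev i j h)
    have hNeq : N' = N := by
      ext x
      constructor
      · intro hx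
        rcases x with _ | ⟨i, j⟩
        · exact h0N
        exact Or.inr ⟨i, j, rfl, hN'S hx, hN'rev i j hx⟩
      · rintro (rfl | ⟨i, j, rfl, h1, h2⟩)
        · exact hN'0
        · exact hNN' i j h1 h2
    simp only [Prod.mk.injEq]
    exact ⟨hIeq, hNeq⟩
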